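/- Let k and n be integers with 3 ≤ k < n and let λ > 0. Define F(x) = 1 − exp(−λx) and f(x) = λ·exp(−λx) for x ≥ 0, and define β(x) = x + (1/λ)·Σ_{i=1}^{k−2} C(k−2,i) · ((n−k)!·(i−1)!/(n−k+i)!) · (exp(λx) − 1)^i. Then β is strictly increasing on [0,∞), and for every x ≥ 0, ∫₀^x (x − β(y))·F(y)^{n−k}·(F(x) − F(y))^{k−3}·f(y) dy = 0. -/

import Mathlib

open MeasureTheory intervalIntegral Set
namespace Kth2


noncomputable def Kc (m j : ℕ) : ℝ := (m.factorial : ℝ) * j.factorial / (m+j+1).factorial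

noncomputable def Ec (m p j r : ℕ) : ℝ :=
  ((p-j).choose r : ℝ) * m.factorial * j.factorial * (r-1).factorial / ((m+j+r+1).factorial : ℝ)

noncomputable def Sb (m p : ℕ) (u : ℝ) : ℝ :=
  ∑ i ∈ Finset.Icc 1 (p+1), ((p+1).choose i : ℝ) *
    ((m.factorial : ℝ) * ((i-1).factorial : ℝ) / ((m+i).factorial : ℝ)) * ((1-u)/u)^i

noncomputable def Rj (m p j : ℕ) (v : ℝ) : ℝ :=
  - ∑ r ∈ Finset.Icc 1 (p-j), Ec m p j r * ((1-v)^(m+j+r+1) / v^r)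

noncomputable def Phi (m p j : ℕ) (v : ℝ) : ℝ :=
  Kc m j * ((1-v)^(m+j+1) * Real.log v) + Rj m p j v

noncomputable def Psi (m j : ℕ) (v : ℝ) : ℝ := Kc m j * (1-v)^(m+j+1)

lemma fact_ne (q : ℕ) : ((q.factorial : ℝ)) ≠ 0 := Nat.cast_ne_zero.mpr q.factorial_ne_zero

lemma Kc_succ (m j : ℕ) : Kc m (j+1) * ((m:ℝ)+(j:ℝ)+2) = ((j:ℝ)+1) * Kc m j := by
  unfold Kc
  have h1 : (m+(j+1)+1).factorial = (m+j+2) * (m+j+1).factorial := by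
    rw [show m+(j+1)+1 = (m+j+1)+1 by ring, Nat.factorial_succ]
  have h2 : (j+1).factorial = (j+1) * j.factorial := Nat.factorial_succ j
  rw [h1, h2]
  have := fact_ne (m+j+1)
  field_simp
  push_cast
  ring

lemma Kc_zero (m : ℕ) : ((m:ℝ)+1) * Kc m 0 = 1 := by
  unfold Kc
  rw [show m+0+1 = m+1 by ring, Nat.factorial_succ]
  have := fact_ne m
  field_simp
  push_cast [Nat.factorial_zero]
  ring

lemma hasDerivAt_onesub_pow (e : ℕ) (v : ℝ) :
    HasDerivAt (fun w : ℝ => (1-w)^(e+1)) (-(((e:ℝ)+1) * (1-v)^e)) v := by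
  have h := (hasDerivAt_pow (e+1) (1-v)).comp v ((hasDerivAt_const v (1:ℝ)).sub (hasDerivAt_id v))
  refine h.congr_deriv (Eq.symm ?_)
  simp [Nat.add_sub_cancel]

lemma hasDerivAt_term (c : ℝ) (e r : ℕ) {v : ℝ} (hv : v ≠ 0) :
    HasDerivAt (fun w => c * ((1-w)^(e+1) / w^(r+1)))
      (-(((e:ℝ)+1) * (c * ((1-v)^e / v^(r+1))) + ((r:ℝ)+1) * (c * ((1-v)^(e+1) / v^(r+2))))) v := by
  have hnum : HasDerivAt (fun w : ℝ => (1-w)^(e+1)) (-(((e:ℝ)+1) * (1-v)^e)) v :=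
    hasDerivAt_onesub_pow e v
  have hden : HasDerivAt (fun w : ℝ => w^(r+1)) (((r:ℝ)+1) * v^r) v := by
    have := hasDerivAt_pow (r+1) v
    simpa using this
  have hd := hnum.div hden (pow_ne_zero (r+1) hv)
  have := hd.const_mul c
  refine this.congr_deriv (Eq.symm ?_)
  have hv2 : v^(r+1) ≠ 0 := pow_ne_zero _ hv
  field_simp
  ring

lemma Psi_val (m j : ℕ) : Psi m j 1 = 0 := by
  unfold Psi
  norm_num

lemma Psi_d0 (m : ℕ) {v : ℝ} (hv : 0 < v) :
    HasDerivAt (Psi m 0) (-((1-v)^m)) v := by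
  have h := (hasDerivAt_onesub_pow (m+0) v).const_mul (Kc m 0)
  refine h.congr_deriv (Eq.symm ?_)
  have := Kc_zero m
  push_cast
  linear_combination ((1-v)^m) * this

lemma Psi_dS (m j : ℕ) {v : ℝ} (hv : 0 < v) :
    HasDerivAt (Psi m (j+1)) (-(((j:ℝ)+1) * Psi m j v)) v := by
  have h := (hasDerivAt_onesub_pow (m+j+1) v).const_mul (Kc m (j+1))
  refine h.congr_deriv (Eq.symm ?_)
  have := Kc_succ m j
  unfold Psi
  push_cast
  linear_combination ((1-v)^(m+j+1)) * this



lemma uIcc_sub_Ioi {v w : ℝ} (hv : 0 < v) (hw : 0 < w) : Set.uIcc v w ⊆ Set.Ioi 0 := by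
  intro t ht
  rcases Set.mem_uIcc.1 ht with h | h
  · exact lt_of_lt_of_le hv h.1
  · exact lt_of_lt_of_le hw h.1

lemma intInt {h : ℝ → ℝ} (hc : ContinuousOn h (Set.Ioi 0)) {v w : ℝ} (hv : 0 < v) (hw : 0 < w) :
    IntervalIntegrable h volume v w :=
  (hc.mono (uIcc_sub_Ioi hv hw)).intervalIntegrable

lemma contmul {h : ℝ → ℝ} (hc : ContinuousOn h (Set.Ioi 0)) (r : ℕ) :
    ContinuousOn (fun u => h u * u ^ r) (Set.Ioi 0) :=
  hc.mul ((continuousOn_id).pow r)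

lemma expand {h : ℝ → ℝ} (hc : ContinuousOn h (Set.Ioi 0)) (j : ℕ) {w : ℝ} (hw : 0 < w) :
    (∫ u in w..(1:ℝ), h u * (u - w)^j)
      = ∑ r ∈ Finset.range (j+1),
          ((j.choose r : ℝ) * (-w)^(j-r)) * ∫ u in w..(1:ℝ), h u * u^r := by
  have hint : ∀ r ∈ Finset.range (j+1),
      IntervalIntegrable (fun u => ((j.choose r : ℝ) * (-w)^(j-r)) * (h u * u^r)) volume w 1 :=
    fun r _ => (intInt (continuousOn_const.mul (contmul hc r)) hw one_pos)
  have h1 : ∀ r ∈ Finset.range (j+1),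
      ((j.choose r : ℝ) * (-w)^(j-r)) * (∫ u in w..(1:ℝ), h u * u^r)
        = ∫ u in w..(1:ℝ), ((j.choose r : ℝ) * (-w)^(j-r)) * (h u * u^r) :=
    fun r _ => (intervalIntegral.integral_const_mul _ _).symm
  rw [Finset.sum_congr rfl h1, ← intervalIntegral.integral_finset_sum hint]
  apply intervalIntegral.integral_congr
  intro u _
  simp only
  rw [sub_eq_add_neg, add_pow, Finset.mul_sum]
  refine Finset.sum_congr rfl fun r _ => by ring

lemma natid (j r : ℕ) :
    ((j + 1 - r : ℕ) : ℝ) * ((j+1).choose r : ℝ) = ((j:ℝ)+1) * (j.choose r : ℝ) := by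
  have h1 := Nat.add_one_mul_choose_eq j r
  have h2 := Nat.choose_succ_right_eq (j+1) r
  have h3 : (j+1).choose r * (j + 1 - r) = (j+1) * j.choose r := by
    rw [← h2, h1]
  calc ((j + 1 - r : ℕ) : ℝ) * ((j+1).choose r : ℝ)
      = (((j+1).choose r * (j + 1 - r) : ℕ) : ℝ) := by push_cast; ring
    _ = (((j+1) * j.choose r : ℕ) : ℝ) := by rw [h3]
    _ = ((j:ℝ)+1) * (j.choose r : ℝ) := by push_cast; ring

lemma lemD {h : ℝ → ℝ} (hc : ContinuousOn h (Set.Ioi 0)) (j : ℕ) {v : ℝ} (hv : 0 < v) :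
    HasDerivAt (fun w => ∫ u in w..(1:ℝ), h u * (u - w)^j)
      (-((j:ℝ) * ∫ u in v..(1:ℝ), h u * (u - v)^(j-1)) - (if j = 0 then h v else 0)) v := by
  rcases j with _ | j
  · simp only [pow_zero, mul_one, Nat.cast_zero, zero_mul, neg_zero, zero_sub, if_pos rfl]
    exact intervalIntegral.integral_hasDerivAt_left (intInt hc hv one_pos)
      (hc.stronglyMeasurableAtFilter isOpen_Ioi v hv) (hc.continuousAt (Ioi_mem_nhds hv))
  · have hA : ∀ r : ℕ, HasDerivAt (fun w => ∫ u in w..(1:ℝ), h u * u ^ r)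
        (-(h v * v ^ r)) v := fun r =>
      intervalIntegral.integral_hasDerivAt_left (intInt (contmul hc r) hv one_pos)
        ((contmul hc r).stronglyMeasurableAtFilter isOpen_Ioi v hv)
        ((contmul hc r).continuousAt (Ioi_mem_nhds hv))
    have hterm : ∀ r ∈ Finset.range (j+1+1), HasDerivAt
        (fun w => (((j+1).choose r : ℝ) * (-w)^(j+1-r)) * ∫ u in w..(1:ℝ), h u * u^r)
        ((((j+1).choose r : ℝ) * (((j+1-r:ℕ):ℝ) * (-v)^(j+1-r-1) * (-1))) * (∫ u in v..(1:ℝ), h u * u^r)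
          + (((j+1).choose r : ℝ) * (-v)^(j+1-r)) * (-(h v * v ^ r))) v := by
      intro r _
      have hp : HasDerivAt (fun w : ℝ => (-w)^(j+1-r)) (((j+1-r:ℕ):ℝ) * (-v)^(j+1-r-1) * (-1)) v :=
        (hasDerivAt_pow (j+1-r) (-v)).comp v (hasDerivAt_neg v)
      exact ((hp.const_mul ((j+1).choose r : ℝ)).mul (hA r))
    have hsum := HasDerivAt.fun_sum hterm
    have heq : (fun w => ∫ u in w..(1:ℝ), h u * (u - w)^(j+1)) =ᶠ[nhds v]
        (fun w => ∑ r ∈ Finset.range (j+1+1),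
          (((j+1).choose r : ℝ) * (-w)^(j+1-r)) * ∫ u in w..(1:ℝ), h u * u^r) := by
      filter_upwards [Ioi_mem_nhds hv] with w hw
      exact expand hc (j+1) hw
    have hD := hsum.congr_of_eventuallyEq heq
    refine hD.congr_deriv (Eq.symm ?_)
    rw [Finset.sum_add_distrib]
    have hs2 : ∑ r ∈ Finset.range (j+1+1),
        (((j+1).choose r : ℝ) * (-v)^(j+1-r)) * (-(h v * v ^ r)) = 0 := by
      have he : ∑ r ∈ Finset.range (j+1+1), (((j+1).choose r : ℝ) * (-v)^(j+1-r)) * (-(h v * v ^ r))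
          = -(h v) * ∑ r ∈ Finset.range (j+1+1), v^r * (-v)^(j+1-r) * ((j+1).choose r : ℝ) := by
        rw [Finset.mul_sum]; exact Finset.sum_congr rfl fun r _ => by ring
      rw [he, ← add_pow]
      simp
    have hs1 : ∑ r ∈ Finset.range (j+1+1),
        ((((j+1).choose r : ℝ) * (((j+1-r:ℕ):ℝ) * (-v)^(j+1-r-1) * (-1)))) * (∫ u in v..(1:ℝ), h u * u^r)
        = -(((j:ℝ)+1) * ∫ u in v..(1:ℝ), h u * (u - v)^j) := by
      rw [Finset.sum_range_succ]
      have hlast : ((((j+1).choose (j+1) : ℝ) * (((j+1-(j+1):ℕ):ℝ) * (-v)^(j+1-(j+1)-1) * (-1)))) * (∫ u in v..(1:ℝ), h u * u^(j+1)) = 0 := by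
        simp
      rw [hlast, add_zero]
      have hre : ∀ r ∈ Finset.range (j+1),
          ((((j+1).choose r : ℝ) * (((j+1-r:ℕ):ℝ) * (-v)^(j+1-r-1) * (-1)))) * (∫ u in v..(1:ℝ), h u * u^r)
          = -(((j:ℝ)+1) * (((j.choose r : ℝ) * (-v)^(j-r)) * (∫ u in v..(1:ℝ), h u * u^r))) := by
        intro r hr
        have hexp : j + 1 - r - 1 = j - r := by omega
        rw [hexp]
        calc (((j+1).choose r : ℝ) * (((j+1-r:ℕ):ℝ) * (-v)^(j-r) * (-1))) * (∫ u in v..(1:ℝ), h u * u^r)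
            = -((((j + 1 - r : ℕ):ℝ) * (((j+1).choose r : ℝ))) * ((-v)^(j-r) * (∫ u in v..(1:ℝ), h u * u^r))) := by ring
          _ = -((((j:ℝ)+1) * (j.choose r : ℝ)) * ((-v)^(j-r) * (∫ u in v..(1:ℝ), h u * u^r))) := by rw [natid j r]
          _ = -(((j:ℝ)+1) * (((j.choose r : ℝ) * (-v)^(j-r)) * (∫ u in v..(1:ℝ), h u * u^r))) := by ring
      rw [Finset.sum_congr rfl hre, Finset.sum_neg_distrib, ← Finset.mul_sum, expand hc j hv]
    rw [hs1, hs2, add_zero]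
    norm_num




lemma chain {h : ℝ → ℝ} (hc : ContinuousOn h (Set.Ioi 0)) (p : ℕ) (Φ : ℕ → ℝ → ℝ)
    (hval : ∀ j, j ≤ p → Φ j 1 = 0)
    (hd0 : ∀ v : ℝ, 0 < v → HasDerivAt (Φ 0) (-(h v)) v)
    (hdS : ∀ j, j + 1 ≤ p → ∀ v : ℝ, 0 < v → HasDerivAt (Φ (j+1)) (-(((j:ℝ)+1) * Φ j v)) v) :
    ∀ j, j ≤ p → ∀ v : ℝ, 0 < v → (∫ u in v..(1:ℝ), h u * (u - v)^j) = Φ j v := by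
  intro j
  induction j with
  | zero =>
    intro _ v hv
    have hderiv : ∀ t ∈ Set.uIcc v (1:ℝ), HasDerivAt (Φ 0) (-(h t)) t :=
      fun t ht => hd0 t (uIcc_sub_Ioi hv one_pos ht)
    have hint : IntervalIntegrable (fun t => -(h t)) volume v 1 := (intInt hc hv one_pos).neg
    have h2 := intervalIntegral.integral_eq_sub_of_hasDerivAt hderiv hint
    rw [hval 0 (Nat.zero_le p)] at h2
    have h3 : ∫ t in v..(1:ℝ), -(h t) = - ∫ t in v..(1:ℝ), h t := intervalIntegral.integral_neg
    simp only [pow_zero, mul_one]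
    rw [h3] at h2
    linarith [h2]
  | succ j ih =>
    intro hjp v hv
    have hj : j ≤ p := by omega
    have ihj := ih hj
    -- continuity of Φ j on Ioi 0
    have hcontj : ContinuousOn (Φ j) (Set.Ioi 0) := by
      intro t ht
      have ht' : (0:ℝ) < t := ht
      rcases j with _ | j'
      · exact ((hd0 t ht').continuousAt).continuousWithinAt
      · exact (((hdS j' (by omega) t ht').continuousAt)).continuousWithinAt
    have hq : ∀ t ∈ Set.uIcc v (1:ℝ), HasDerivAt (fun w => ∫ u in w..(1:ℝ), h u * (u - w)^(j+1))
        (-(((j:ℝ)+1) * Φ j t)) t := by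
      intro t ht
      have ht' : (0:ℝ) < t := uIcc_sub_Ioi hv one_pos ht
      have := lemD hc (j+1) ht'
      simp only [Nat.add_sub_cancel, if_neg (Nat.succ_ne_zero j)] at this
      rw [ihj t ht'] at this
      convert this using 1
      push_cast
      ring
    have hPhiD : ∀ t ∈ Set.uIcc v (1:ℝ), HasDerivAt (Φ (j+1)) (-(((j:ℝ)+1) * Φ j t)) t :=
      fun t ht => hdS j hjp t (uIcc_sub_Ioi hv one_pos ht)
    have hint : IntervalIntegrable (fun t => -(((j:ℝ)+1) * Φ j t)) volume v 1 :=
      ((intInt hcontj hv one_pos).const_mul _).neg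
    have e1 := intervalIntegral.integral_eq_sub_of_hasDerivAt hq hint
    have e2 := intervalIntegral.integral_eq_sub_of_hasDerivAt hPhiD hint
    rw [hval (j+1) hjp] at e2
    rw [e2] at e1
    have hq1 : (∫ u in (1:ℝ)..(1:ℝ), h u * (u - 1)^(j+1)) = 0 := intervalIntegral.integral_same
    rw [hq1] at e1
    linarith [e1]

lemma shift_sum (q : ℕ) (f : ℕ → ℝ) :
    ∑ s ∈ Finset.Icc 2 (q+1), f s = ∑ r ∈ Finset.Icc 1 q, f (r+1) := by
  have h : Finset.Icc 2 (q+1) = (Finset.Icc 1 q).map (addRightEmbedding 1) := by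
    rw [Finset.map_add_right_Icc]
  rw [h, Finset.sum_map]
  rfl

lemma sum_peel (q : ℕ) (f : ℕ → ℝ) :
    ∑ i ∈ Finset.Icc 1 (q+1), f i = f 1 + ∑ i ∈ Finset.Icc 2 (q+1), f i := by
  have h : Finset.Icc 1 (q+1) = insert 1 (Finset.Icc 2 (q+1)) := by
    ext x; simp [Finset.mem_Icc, Finset.mem_insert]; omega
  rw [h, Finset.sum_insert (by simp)]

lemma sum_extend (q : ℕ) (f : ℕ → ℝ) (hf : f (q+1) = 0) :
    ∑ r ∈ Finset.Icc 1 q, f r = ∑ r ∈ Finset.Icc 1 (q+1), f r := by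
  apply Finset.sum_subset (Finset.Icc_subset_Icc_right (by omega))
  intro x hx hx'
  have : x = q+1 := by
    simp [Finset.mem_Icc] at hx hx'; omega
  rw [this]; exact hf

lemma coefA (m p s : ℕ) :
    ((m:ℝ) + ((s:ℝ)+2) + 1) * Ec m p 0 (s+2) + (((s:ℝ)+2) - 1) * Ec m p 0 (s+1)
      = (((p+1).choose (s+2) : ℝ)) * ((m.factorial : ℝ) * (((s+2)-1).factorial : ℝ) / ((m+(s+2)).factorial : ℝ)) := by
  unfold Ec
  rw [Nat.sub_zero]
  have hd1 : s+2-1 = s+1 := by omega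
  have hd2 : s+1-1 = s := by omega
  rw [hd1, hd2, Nat.choose_succ_succ p (s+1)]
  have e1 : (m+0+(s+2)+1).factorial = (m+(s+2)+1) * (m+(s+2)).factorial := by
    rw [show m+0+(s+2)+1 = (m+(s+2))+1 by ring, Nat.factorial_succ]
  have e2 : (m+0+(s+1)+1).factorial = (m+(s+2)).factorial := by
    rw [show m+0+(s+1)+1 = m+(s+2) by ring]
  rw [e1, e2]
  simp only [show (s+1).factorial = (s+1) * s.factorial from Nat.factorial_succ s]
  have h2 := fact_ne (m+(s+2))
  have h3 := fact_ne s
  have h4 := fact_ne m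
  field_simp
  push_cast
  ring

lemma coefA1 (m p : ℕ) :
    ((m:ℝ) + 1 + 1) * Ec m p 0 1
      = (((p+1).choose 1 : ℝ)) * ((m.factorial : ℝ) * ((((1:ℕ)-1)).factorial : ℝ) / ((m+1).factorial : ℝ)) - Kc m 0 := by
  unfold Ec Kc
  rw [Nat.sub_zero]
  norm_num
  have e1 : (m+0+1+1).factorial = ((m+1)+1) * (m+1).factorial := by
    rw [show m+0+1+1 = (m+1)+1 by ring, Nat.factorial_succ]
  have e2 : (m+0+1).factorial = (m+1).factorial := by rw [show m+0+1 = m+1 by ring]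
  rw [e1, e2]
  have h2 := fact_ne (m+1)
  have h4 := fact_ne m
  field_simp
  push_cast
  ring

lemma identA (m p : ℕ) {v : ℝ} (hv : v ≠ 0) :
    ∑ r ∈ Finset.Icc 1 p,
      (((m:ℝ)+r+1) * (Ec m p 0 r * ((1-v)^(m+r) / v^r))
        + (r:ℝ) * (Ec m p 0 r * ((1-v)^(m+r+1) / v^(r+1))))
    = Sb m p v * (1-v)^m - Kc m 0 * ((1-v)^(m+1) / v) := by
  rw [Finset.sum_add_distrib]
  have h2 : ∑ r ∈ Finset.Icc 1 p, (r:ℝ) * (Ec m p 0 r * ((1-v)^(m+r+1) / v^(r+1)))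
      = ∑ s ∈ Finset.Icc 2 (p+1), ((s:ℝ)-1) * (Ec m p 0 (s-1) * ((1-v)^(m+s) / v^s)) := by
    rw [shift_sum]
    refine Finset.sum_congr rfl fun r hr => ?_
    simp only [Nat.add_sub_cancel]
    push_cast
    ring_nf
  rw [h2]
  have h2' : ∑ s ∈ Finset.Icc 2 (p+1), ((s:ℝ)-1) * (Ec m p 0 (s-1) * ((1-v)^(m+s) / v^s))
      = ∑ s ∈ Finset.Icc 1 (p+1), ((s:ℝ)-1) * (Ec m p 0 (s-1) * ((1-v)^(m+s) / v^s)) := by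
    rw [sum_peel]
    norm_num
  rw [h2']
  have h1' : ∑ r ∈ Finset.Icc 1 p, ((m:ℝ)+r+1) * (Ec m p 0 r * ((1-v)^(m+r) / v^r))
      = ∑ r ∈ Finset.Icc 1 (p+1), ((m:ℝ)+r+1) * (Ec m p 0 r * ((1-v)^(m+r) / v^r)) := by
    apply sum_extend
    have h0 : Ec m p 0 (p+1) = 0 := by
      unfold Ec
      rw [Nat.sub_zero, Nat.choose_eq_zero_of_lt (by omega)]
      simp
    rw [h0]; ring
  rw [h1']
  have hSb : Sb m p v * (1-v)^m
      = ∑ i ∈ Finset.Icc 1 (p+1), ((p+1).choose i : ℝ) *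
          ((m.factorial : ℝ) * ((i-1).factorial : ℝ) / ((m+i).factorial : ℝ)) * ((1-v)^(m+i) / v^i) := by
    unfold Sb
    rw [Finset.sum_mul]
    refine Finset.sum_congr rfl fun i _ => ?_
    rw [div_pow, pow_add]
    field_simp
  rw [hSb]
  rw [← Finset.sum_add_distrib]
  rw [sum_peel (f := fun i => ((m:ℝ)+i+1) * (Ec m p 0 i * ((1-v)^(m+i) / v^i))
        + ((i:ℝ)-1) * (Ec m p 0 (i-1) * ((1-v)^(m+i) / v^i))),
     sum_peel (f := fun i => ((p+1).choose i : ℝ) *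
          ((m.factorial : ℝ) * ((i-1).factorial : ℝ) / ((m+i).factorial : ℝ)) * ((1-v)^(m+i) / v^i))]
  have hmid : ∑ i ∈ Finset.Icc 2 (p+1),
      (((m:ℝ)+i+1) * (Ec m p 0 i * ((1-v)^(m+i) / v^i))
        + ((i:ℝ)-1) * (Ec m p 0 (i-1) * ((1-v)^(m+i) / v^i)))
      = ∑ i ∈ Finset.Icc 2 (p+1), ((p+1).choose i : ℝ) *
          ((m.factorial : ℝ) * ((i-1).factorial : ℝ) / ((m+i).factorial : ℝ)) * ((1-v)^(m+i) / v^i) := by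
    refine Finset.sum_congr rfl fun i hi => ?_
    obtain ⟨s, rfl⟩ : ∃ s, i = s + 2 := by
      simp [Finset.mem_Icc] at hi; exact ⟨i - 2, by omega⟩
    have hc := coefA m p s
    have hd1 : s+2-1 = s+1 := by omega
    rw [hd1] at hc ⊢
    push_cast
    linear_combination ((1-v)^(m+(s+2)) / v^(s+2)) * hc
  rw [hmid]
  have hc1 := coefA1 m p
  push_cast
  linear_combination ((1-v)^(m+1) / v^1) * hc1


noncomputable def EcB (m j q r : ℕ) : ℝ :=
  (q.choose r : ℝ) * m.factorial * (j+1).factorial * (r-1).factorial / ((m+j+r+2).factorial : ℝ)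
noncomputable def EcA (m j q r : ℕ) : ℝ :=
  ((q+1).choose r : ℝ) * m.factorial * j.factorial * (r-1).factorial / ((m+j+r+1).factorial : ℝ)

lemma coefB (m j q s : ℕ) :
    ((m:ℝ)+(j:ℝ)+((s:ℝ)+2)+2) * EcB m j q (s+2) + (((s:ℝ)+2)-1) * EcB m j q (s+1)
      = ((j:ℝ)+1) * EcA m j q (s+2) := by
  unfold EcB EcA
  have hd1 : s+2-1 = s+1 := by omega
  have hd2 : s+1-1 = s := by omega
  rw [hd1, hd2, Nat.choose_succ_succ q (s+1)]
  simp only [Nat.succ_eq_add_one, show s+1+1 = s+2 from by omega]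
  have e1 : (m+j+(s+2)+2).factorial = (m+j+(s+2)+2) * (m+j+(s+1)+2).factorial := by
    rw [show m+j+(s+2)+2 = (m+j+(s+1)+2)+1 by ring, Nat.factorial_succ]
  have e2 : (m+j+(s+2)+1).factorial = (m+j+(s+1)+2).factorial := by
    rw [show m+j+(s+2)+1 = m+j+(s+1)+2 by ring]
  rw [e1, e2]
  simp only [show (s+1).factorial = (s+1) * s.factorial from Nat.factorial_succ s,
    show (j+1).factorial = (j+1) * j.factorial from Nat.factorial_succ j]
  have h2 := fact_ne (m+j+(s+1)+2)
  have h3 := fact_ne s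
  have h4 := fact_ne m
  have h5 := fact_ne j
  field_simp
  push_cast
  ring

lemma coefB1 (m j q : ℕ) :
    ((m:ℝ)+(j:ℝ)+1+2) * EcB m j q 1 + Kc m (j+1) = ((j:ℝ)+1) * EcA m j q 1 := by
  unfold EcB EcA Kc
  norm_num
  have e1 : (m+j+1+2).factorial = (m+j+1+2) * (m+j+2).factorial := by
    rw [show m+j+1+2 = (m+j+2)+1 by ring, Nat.factorial_succ]
  have e2 : (m+(j+1)+1).factorial = (m+j+2).factorial := by
    rw [show m+(j+1)+1 = m+j+2 by ring]
  have e3 : (m+j+1+1).factorial = (m+j+2).factorial := by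
    rw [show m+j+1+1 = m+j+2 by ring]
  rw [e1, e2, e3]
  simp only [show (j+1).factorial = (j+1) * j.factorial from Nat.factorial_succ j]
  have h2 := fact_ne (m+j+2)
  have h4 := fact_ne m
  have h5 := fact_ne j
  field_simp
  push_cast
  ring

lemma identB (m j q : ℕ) {v : ℝ} (hv : v ≠ 0) :
    ∑ r ∈ Finset.Icc 1 q,
      (((m:ℝ)+(j:ℝ)+(r:ℝ)+2) * (EcB m j q r * ((1-v)^(m+j+r+1) / v^r))
        + (r:ℝ) * (EcB m j q r * ((1-v)^(m+j+r+2) / v^(r+1))))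
      + Kc m (j+1) * ((1-v)^(m+j+2) / v)
    = ((j:ℝ)+1) * ∑ r ∈ Finset.Icc 1 (q+1), EcA m j q r * ((1-v)^(m+j+r+1) / v^r) := by
  rw [Finset.mul_sum, Finset.sum_add_distrib]
  have h2 : ∑ r ∈ Finset.Icc 1 q, (r:ℝ) * (EcB m j q r * ((1-v)^(m+j+r+2) / v^(r+1)))
      = ∑ s ∈ Finset.Icc 2 (q+1), ((s:ℝ)-1) * (EcB m j q (s-1) * ((1-v)^(m+j+s+1) / v^s)) := by
    rw [shift_sum]
    refine Finset.sum_congr rfl fun r hr => ?_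
    simp only [Nat.add_sub_cancel]
    push_cast
    ring_nf
  rw [h2]
  have h2' : ∑ s ∈ Finset.Icc 2 (q+1), ((s:ℝ)-1) * (EcB m j q (s-1) * ((1-v)^(m+j+s+1) / v^s))
      = ∑ s ∈ Finset.Icc 1 (q+1), ((s:ℝ)-1) * (EcB m j q (s-1) * ((1-v)^(m+j+s+1) / v^s)) := by
    rw [sum_peel]
    norm_num
  rw [h2']
  have h1' : ∑ r ∈ Finset.Icc 1 q, ((m:ℝ)+(j:ℝ)+(r:ℝ)+2) * (EcB m j q r * ((1-v)^(m+j+r+1) / v^r))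
      = ∑ r ∈ Finset.Icc 1 (q+1), ((m:ℝ)+(j:ℝ)+(r:ℝ)+2) * (EcB m j q r * ((1-v)^(m+j+r+1) / v^r)) := by
    apply sum_extend
    have h0 : EcB m j q (q+1) = 0 := by
      unfold EcB
      rw [Nat.choose_eq_zero_of_lt (by omega)]
      simp
    rw [h0]; ring
  rw [h1']
  rw [← Finset.sum_add_distrib]
  rw [sum_peel (f := fun r => ((m:ℝ)+(j:ℝ)+(r:ℝ)+2) * (EcB m j q r * ((1-v)^(m+j+r+1) / v^r))
        + ((r:ℝ)-1) * (EcB m j q (r-1) * ((1-v)^(m+j+r+1) / v^r))),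
     sum_peel (f := fun r => ((j:ℝ)+1) * (EcA m j q r * ((1-v)^(m+j+r+1) / v^r)))]
  have hmid : ∑ i ∈ Finset.Icc 2 (q+1),
      (((m:ℝ)+(j:ℝ)+(i:ℝ)+2) * (EcB m j q i * ((1-v)^(m+j+i+1) / v^i))
        + ((i:ℝ)-1) * (EcB m j q (i-1) * ((1-v)^(m+j+i+1) / v^i)))
      = ∑ i ∈ Finset.Icc 2 (q+1), ((j:ℝ)+1) * (EcA m j q i * ((1-v)^(m+j+i+1) / v^i)) := by
    refine Finset.sum_congr rfl fun i hi => ?_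
    obtain ⟨s, rfl⟩ : ∃ s, i = s + 2 := by
      simp [Finset.mem_Icc] at hi; exact ⟨i - 2, by omega⟩
    have hc := coefB m j q s
    have hd1 : s+2-1 = s+1 := by omega
    rw [hd1]
    push_cast
    linear_combination ((1-v)^(m+j+(s+2)+1) / v^(s+2)) * hc
  rw [hmid]
  have hc1 := coefB1 m j q
  push_cast
  linear_combination ((1-v)^(m+j+1+1) / v^1) * hc1

lemma hasDerivAt_Rterm (c : ℝ) (a b r : ℕ) (hb : b = a+1) (hr : 1 ≤ r) {v : ℝ} (hv : v ≠ 0) :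
    HasDerivAt (fun w => c * ((1-w)^b / w^r))
      (-(((a:ℝ)+1) * (c * ((1-v)^a / v^r))
        + (r:ℝ) * (c * ((1-v)^b / v^(r+1))))) v := by
  subst hb
  obtain ⟨r', rfl⟩ : ∃ r', r = r'+1 := ⟨r-1, by omega⟩
  have h := hasDerivAt_term c a r' hv
  convert h using 1
  push_cast
  ring

lemma Phi_val (m p j : ℕ) : Phi m p j 1 = 0 := by
  unfold Phi Rj
  rw [Real.log_one]
  have hz : ∀ r ∈ Finset.Icc 1 (p-j), Ec m p j r * ((1-(1:ℝ))^(m+j+r+1) / (1:ℝ)^r) = 0 := by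
    intro r _
    rw [sub_self, zero_pow (by omega)]
    simp
  rw [Finset.sum_congr rfl hz]
  simp

lemma Rj_zero_eq (m p : ℕ) : Rj m p 0 = fun w =>
    - ∑ r ∈ Finset.Icc 1 p, Ec m p 0 r * ((1-w)^(m+r+1) / w^r) := by
  unfold Rj
  simp only [Nat.sub_zero, Nat.add_zero]

lemma Phi_d0 (m p : ℕ) {v : ℝ} (hv : 0 < v) :
    HasDerivAt (Phi m p 0) (-((Real.log v - Sb m p v) * (1-v)^m)) v := by
  have hlogpart : HasDerivAt (fun w => Kc m 0 * ((1-w)^(m+1) * Real.log w))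
      (Kc m 0 * ((-(((m:ℝ)+1) * (1-v)^m)) * Real.log v + (1-v)^(m+1) * v⁻¹)) v :=
    (((hasDerivAt_onesub_pow m v).mul (Real.hasDerivAt_log hv.ne'))).const_mul _
  have hterm : ∀ r ∈ Finset.Icc 1 p, HasDerivAt
      (fun w => Ec m p 0 r * ((1-w)^(m+r+1) / w^r))
      (-(((m:ℝ)+(r:ℝ)+1) * (Ec m p 0 r * ((1-v)^(m+r) / v^r))
        + (r:ℝ) * (Ec m p 0 r * ((1-v)^(m+r+1) / v^(r+1))))) v := by
    intro r hr
    have h1 : 1 ≤ r := (Finset.mem_Icc.1 hr).1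
    have h := hasDerivAt_Rterm (Ec m p 0 r) (m+r) (m+r+1) r rfl h1 hv.ne'
    convert h using 1
    push_cast
    ring
  have hRd : HasDerivAt (Rj m p 0)
      (∑ r ∈ Finset.Icc 1 p,
        (((m:ℝ)+(r:ℝ)+1) * (Ec m p 0 r * ((1-v)^(m+r) / v^r))
          + (r:ℝ) * (Ec m p 0 r * ((1-v)^(m+r+1) / v^(r+1))))) v := by
    rw [Rj_zero_eq]
    have := (HasDerivAt.fun_sum hterm).neg
    refine this.congr_deriv (Eq.symm ?_)
    rw [← Finset.sum_neg_distrib]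
    exact Finset.sum_congr rfl fun r _ => by ring
  have hd := hlogpart.add hRd
  have hPhi : Phi m p 0 = fun w => Kc m 0 * ((1-w)^(m+1) * Real.log w) + Rj m p 0 w := by
    unfold Phi
    simp only [Nat.add_zero]
  rw [hPhi]
  refine hd.congr_deriv (Eq.symm ?_)
  have hK := Kc_zero m
  have hA := identA m p hv.ne'
  push_cast
  linear_combination ((1-v)^m * Real.log v) * hK - hA

lemma Phi_dS (m p j : ℕ) (hjp : j + 1 ≤ p) {v : ℝ} (hv : 0 < v) :
    HasDerivAt (Phi m p (j+1)) (-(((j:ℝ)+1) * Phi m p j v)) v := by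
  obtain ⟨q, rfl⟩ : ∃ q, p = j+1+q := ⟨p-(j+1), by omega⟩
  have hRB : Rj m (j+1+q) (j+1) = fun w =>
      - ∑ r ∈ Finset.Icc 1 q, EcB m j q r * ((1-w)^(m+j+r+2) / w^r) := by
    unfold Rj
    rw [show j+1+q-(j+1) = q by omega]
    funext w
    congr 1
    refine Finset.sum_congr rfl fun r _ => ?_
    unfold Ec EcB
    rw [show j+1+q-(j+1) = q by omega, show m+(j+1)+r+1 = m+j+r+2 by omega]
  have hRA : Rj m (j+1+q) j = fun w =>
      - ∑ r ∈ Finset.Icc 1 (q+1), EcA m j q r * ((1-w)^(m+j+r+1) / w^r) := by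
    unfold Rj
    rw [show j+1+q-j = q+1 by omega]
    funext w
    congr 1
    refine Finset.sum_congr rfl fun r _ => ?_
    unfold Ec EcA
    rw [show j+1+q-j = q+1 by omega]
  have hlogpart := (((hasDerivAt_onesub_pow (m+j+1) v).mul (Real.hasDerivAt_log hv.ne'))).const_mul (Kc m (j+1))
  have hterm : ∀ r ∈ Finset.Icc 1 q, HasDerivAt
      (fun w => EcB m j q r * ((1-w)^(m+j+r+2) / w^r))
      (-(((m:ℝ)+(j:ℝ)+(r:ℝ)+2) * (EcB m j q r * ((1-v)^(m+j+r+1) / v^r))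
        + (r:ℝ) * (EcB m j q r * ((1-v)^(m+j+r+2) / v^(r+1))))) v := by
    intro r hr
    have h1 : 1 ≤ r := (Finset.mem_Icc.1 hr).1
    have h := hasDerivAt_Rterm (EcB m j q r) (m+j+r+1) (m+j+r+2) r rfl h1 hv.ne'
    convert h using 1
    push_cast
    ring
  have hRd : HasDerivAt (Rj m (j+1+q) (j+1))
      (∑ r ∈ Finset.Icc 1 q,
        (((m:ℝ)+(j:ℝ)+(r:ℝ)+2) * (EcB m j q r * ((1-v)^(m+j+r+1) / v^r))
          + (r:ℝ) * (EcB m j q r * ((1-v)^(m+j+r+2) / v^(r+1))))) v := by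
    rw [hRB]
    have := (HasDerivAt.fun_sum hterm).neg
    refine this.congr_deriv (Eq.symm ?_)
    rw [← Finset.sum_neg_distrib]
    exact Finset.sum_congr rfl fun r _ => by ring
  have hd := hlogpart.add hRd
  have hPhi : Phi m (j+1+q) (j+1) = fun w => Kc m (j+1) * ((1-w)^(m+j+1+1) * Real.log w)
      + Rj m (j+1+q) (j+1) w := by
    unfold Phi
    rw [show m+(j+1)+1 = m+j+1+1 by omega]
  rw [hPhi]
  refine hd.congr_deriv (Eq.symm ?_)
  unfold Phi
  rw [hRA]
  have hK := Kc_succ m j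
  have hB := identB m j q hv.ne'
  push_cast
  linear_combination ((1-v)^(m+j+1) * Real.log v) * hK - hB



lemma contOn_pow_sub (m : ℕ) : ContinuousOn (fun u : ℝ => (1-u)^m) (Set.Ioi 0) :=
  (continuousOn_const.sub continuousOn_id).pow m

lemma contSb (m p : ℕ) : ContinuousOn (Sb m p) (Set.Ioi 0) := by
  unfold Sb
  apply continuousOn_finset_sum
  intro i _
  exact continuousOn_const.mul
    (((continuousOn_const.sub continuousOn_id).div continuousOn_id
      (fun t ht => ne_of_gt ht)).pow i)

lemma conth2 (m p : ℕ) :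
    ContinuousOn (fun u => (Real.log u - Sb m p u) * (1-u)^m) (Set.Ioi 0) :=
  ((Real.continuousOn_log.mono (fun t ht => by simpa using ne_of_gt ht)).sub
    (contSb m p)).mul (contOn_pow_sub m)

lemma Mchain (m p : ℕ) : ∀ j, j ≤ p → ∀ v : ℝ, 0 < v →
    (∫ u in v..(1:ℝ), (1-u)^m * (u - v)^j) = Psi m j v :=
  chain (contOn_pow_sub m) p (fun j => Psi m j) (fun j _ => Psi_val m j)
    (fun v hv => Psi_d0 m hv) (fun j _ v hv => Psi_dS m j hv)

lemma Nchain (m p : ℕ) : ∀ j, j ≤ p → ∀ v : ℝ, 0 < v →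
    (∫ u in v..(1:ℝ), ((Real.log u - Sb m p u) * (1-u)^m) * (u - v)^j) = Phi m p j v :=
  chain (conth2 m p) p (fun j => Phi m p j) (fun j _ => Phi_val m p j)
    (fun v hv => Phi_d0 m p hv) (fun j hj v hv => Phi_dS m p j hj hv)

noncomputable def gfun (m p : ℕ) (lam xv : ℝ) (u : ℝ) : ℝ :=
  (-(1/lam)) * ((Real.log u - Real.log xv - Sb m p u) * ((1-u)^m * (u - xv)^p))

lemma gfun_cont (m p : ℕ) (lam xv : ℝ) : ContinuousOn (gfun m p lam xv) (Set.Ioi 0) := by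
  unfold gfun
  apply ContinuousOn.mul continuousOn_const
  apply ContinuousOn.mul
  · exact ((Real.continuousOn_log.mono (fun t ht => by simpa using ne_of_gt ht)).sub
      continuousOn_const).sub (contSb m p)
  · exact (contOn_pow_sub m).mul ((continuousOn_id.sub continuousOn_const).pow p)

end Kth2

open Kth2

/-- Exponential distribution example: for `F x = 1 - e^{-λx}`, the bid function
`β x = x + (1/λ) Σ_{i=1}^{k-2} C(k-2,i) ((n-k)! (i-1)!/(n-k+i)!) (e^{λx}-1)^i`
is strictly increasing and satisfies the equilibrium equation of the `k`-th
price auction with `n` bidders. -/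
theorem kth_price_equilibrium_exponential
    (k n : ℕ) (hk : 3 ≤ k) (hkn : k < n) (lam : ℝ) (hlam : 0 < lam)
    (F f β : ℝ → ℝ)
    (hF : ∀ x : ℝ, 0 ≤ x → F x = 1 - Real.exp (-(lam * x)))
    (hf : ∀ x : ℝ, 0 ≤ x → f x = lam * Real.exp (-(lam * x)))
    (hβ : ∀ x : ℝ, 0 ≤ x → β x = x + (1 / lam) *
      ∑ i ∈ Finset.Icc 1 (k - 2),
        ((k - 2).choose i : ℝ) *
          (((n - k).factorial : ℝ) * ((i - 1).factorial : ℝ) / ((n - k + i).factorial : ℝ)) *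
          (Real.exp (lam * x) - 1) ^ i) :
    StrictMonoOn β (Ici (0:ℝ)) ∧
    ∀ x : ℝ, 0 ≤ x →
      ∫ y in (0:ℝ)..x,
        (x - β y) * F y ^ (n - k) * (F x - F y) ^ (k - 3) * f y = 0 := by
  have hk2 : k - 3 + 1 = k - 2 := by omega
  constructor
  · intro x hx y hy hxy
    simp only [Set.mem_Ici] at hx hy
    rw [hβ x hx, hβ y hy]
    have hsum : (∑ i ∈ Finset.Icc 1 (k-2), ((k-2).choose i : ℝ) *
          (((n-k).factorial : ℝ) * ((i-1).factorial : ℝ) / ((n-k+i).factorial : ℝ)) *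
          (Real.exp (lam * x) - 1)^i)
        ≤ ∑ i ∈ Finset.Icc 1 (k-2), ((k-2).choose i : ℝ) *
          (((n-k).factorial : ℝ) * ((i-1).factorial : ℝ) / ((n-k+i).factorial : ℝ)) *
          (Real.exp (lam * y) - 1)^i := by
      apply Finset.sum_le_sum
      intro i _
      have h0 : (0:ℝ) ≤ Real.exp (lam * x) - 1 := by
        have h1 : Real.exp (0:ℝ) ≤ Real.exp (lam * x) := Real.exp_le_exp.2 (by positivity)
        rw [Real.exp_zero] at h1
        linarith
      have hle : Real.exp (lam * x) - 1 ≤ Real.exp (lam * y) - 1 := by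
        have : Real.exp (lam * x) ≤ Real.exp (lam * y) :=
          Real.exp_le_exp.2 (mul_le_mul_of_nonneg_left hxy.le hlam.le)
        linarith
      have hps := pow_le_pow_left₀ h0 hle i
      have hc : (0:ℝ) ≤ ((k-2).choose i : ℝ) *
          (((n-k).factorial : ℝ) * ((i-1).factorial : ℝ) / ((n-k+i).factorial : ℝ)) := by positivity
      exact mul_le_mul_of_nonneg_left hps hc
    have h1l : (0:ℝ) ≤ 1/lam := by positivity
    have hm2 := mul_le_mul_of_nonneg_left hsum h1l
    linarith
  · intro x hx
    rcases eq_or_lt_of_le hx with heq | hxpos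
    · rw [← heq]
      simp
    have hv0 : (0:ℝ) < Real.exp (-(lam*x)) := Real.exp_pos _
    -- the u-space integral vanishes
    have hzero : (∫ u in (Real.exp (-(lam*x)))..(1:ℝ),
        (Real.log u - Real.log (Real.exp (-(lam*x))) - Sb (n-k) (k-3) u)
          * ((1-u)^(n-k) * (u - Real.exp (-(lam*x)))^(k-3))) = 0 := by
      have hview : ∀ u : ℝ, (Real.log u - Real.log (Real.exp (-(lam*x))) - Sb (n-k) (k-3) u)
            * ((1-u)^(n-k) * (u - Real.exp (-(lam*x)))^(k-3))
          = ((Real.log u - Sb (n-k) (k-3) u) * (1-u)^(n-k)) * (u - Real.exp (-(lam*x)))^(k-3)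
            - Real.log (Real.exp (-(lam*x)))
              * ((1-u)^(n-k) * (u - Real.exp (-(lam*x)))^(k-3)) := fun u => by ring
      simp_rw [hview]
      have hcA : ContinuousOn (fun u => ((Real.log u - Sb (n-k) (k-3) u) * (1-u)^(n-k))
          * (u - Real.exp (-(lam*x)))^(k-3)) (Set.Ioi 0) :=
        (conth2 _ _).mul ((continuousOn_id.sub continuousOn_const).pow _)
      have hcB : ContinuousOn (fun u => (1-u)^(n-k) * (u - Real.exp (-(lam*x)))^(k-3)) (Set.Ioi 0) :=
        (contOn_pow_sub _).mul ((continuousOn_id.sub continuousOn_const).pow _)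
      rw [intervalIntegral.integral_sub (intInt hcA hv0 one_pos)
        ((intInt hcB hv0 one_pos).const_mul _)]
      rw [intervalIntegral.integral_const_mul]
      rw [Nchain (n-k) (k-3) (k-3) le_rfl _ hv0, Mchain (n-k) (k-3) (k-3) le_rfl _ hv0]
      unfold Phi Psi Rj
      rw [Nat.sub_self]
      simp
      ring
    -- pointwise identity on [0,x]
    have key : Set.EqOn (fun y => (x - β y) * F y ^ (n-k) * (F x - F y)^(k-3) * f y)
        (fun y => (-lam * Real.exp (-(lam*y))) •
          gfun (n-k) (k-3) lam (Real.exp (-(lam*x))) (Real.exp (-(lam*y)))) (Set.uIcc 0 x) := by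
      intro y hy
      rw [Set.uIcc_of_le hx] at hy
      have hy0 : 0 ≤ y := hy.1
      simp only
      rw [hF y hy0, hF x hx, hf y hy0, hβ y hy0, smul_eq_mul]
      unfold gfun
      rw [Real.log_exp, Real.log_exp]
      have hbase : (1 - Real.exp (-(lam*y))) / Real.exp (-(lam*y)) = Real.exp (lam*y) - 1 := by
        rw [Real.exp_neg]
        field_simp
      have hSbe : Sb (n-k) (k-3) (Real.exp (-(lam*y)))
          = ∑ i ∈ Finset.Icc 1 (k-2), ((k-2).choose i : ℝ) *
            (((n-k).factorial:ℝ) * ((i-1).factorial:ℝ)/((n-k+i).factorial:ℝ))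
            * (Real.exp (lam*y) - 1)^i := by
        unfold Sb
        rw [hk2]
        refine Finset.sum_congr rfl fun i _ => ?_
        rw [hbase]
      rw [← hSbe]
      have hl : lam ≠ 0 := hlam.ne'
      field_simp
      ring
    rw [intervalIntegral.integral_congr key]
    have hfc : ContinuousOn (fun y => Real.exp (-(lam*y))) (Set.uIcc 0 x) :=
      (Real.continuous_exp.comp ((continuous_const.mul continuous_id).neg)).continuousOn
    have hdf : ∀ y ∈ Set.Ioo (min 0 x) (max 0 x),
        HasDerivWithinAt (fun y => Real.exp (-(lam*y))) (-lam * Real.exp (-(lam*y))) (Set.Ioi y) y := by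
      intro y _
      have h1 : HasDerivAt (fun y : ℝ => -(lam*y)) (-lam) y := by
        exact (((hasDerivAt_id y).const_mul lam).neg).congr_deriv (by simp)
      have h2 := (Real.hasDerivAt_exp (-(lam*y))).comp y h1
      have h3 : HasDerivAt (fun y => Real.exp (-(lam*y))) (-lam * Real.exp (-(lam*y))) y := by
        refine h2.congr_deriv (Eq.symm ?_)
        ring
      exact h3.hasDerivWithinAt
    have hf'c : ContinuousOn (fun y => -lam * Real.exp (-(lam*y))) (Set.uIcc 0 x) :=
      (continuous_const.mul (Real.continuous_exp.comp
        ((continuous_const.mul continuous_id).neg))).continuousOn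
    have himg : (fun y => Real.exp (-(lam*y))) '' (Set.uIcc 0 x) ⊆ Set.Ioi 0 := by
      rintro u ⟨y, _, rfl⟩
      exact Real.exp_pos _
    have hgc := (gfun_cont (n-k) (k-3) lam (Real.exp (-(lam*x)))).mono himg
    have hsub := intervalIntegral.integral_comp_smul_deriv'' hfc hdf hf'c hgc
    simp only [Function.comp] at hsub
    rw [hsub]
    have h00 : Real.exp (-(lam*(0:ℝ))) = 1 := by norm_num
    rw [h00]
    rw [intervalIntegral.integral_symm]
    have hcm : (∫ u in (Real.exp (-(lam*x)))..(1:ℝ),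
        gfun (n-k) (k-3) lam (Real.exp (-(lam*x))) u)
        = (-(1/lam)) * ∫ u in (Real.exp (-(lam*x)))..(1:ℝ),
          ((Real.log u - Real.log (Real.exp (-(lam*x))) - Sb (n-k) (k-3) u)
            * ((1-u)^(n-k) * (u - Real.exp (-(lam*x)))^(k-3))) := by
      rw [← intervalIntegral.integral_const_mul]
      rfl
    rw [hcm, hzero]
    simp
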